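/- Fix 0 < δ < 1/2. Let (n_k) be an increasing sequence of positive integers such that n_{k+1}/n_k ≥ 4/(1−2δ) for all sufficiently large k and n_k^{1/k} → ∞. Then the set S_δ = {x ∈ [0,1] : ‖n_k x‖ > δ for all sufficiently large k} has Hausdorff dimension 1. -/

import Mathlib

set_option linter.unusedSectionVars false
set_option maxHeartbeats 1000000

open Filter MeasureTheory
open scoped NNReal ENNReal

/-- Distance from a real number to the nearest integer. -/
noncomputable def nint (x : ℝ) : ℝ := |x - round x|

section Aux

variable (δ : ℝ) (n : ℕ → ℕ) (K : ℕ)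

/-- the sequence shifted -/
def qq (k : ℕ) : ℕ := n (K + k)

/-- branching number at level k -/
noncomputable def mm (k : ℕ) : ℕ :=
  ⌊(1 - 2*δ) * (qq n K (k+1) : ℝ) / (2 * (qq n K k : ℝ))⌋₊

/-- product of branching numbers -/
noncomputable def MM (k : ℕ) : ℕ := ∏ j ∈ Finset.range k, mm δ n K j

/-- integer addresses of nested intervals -/
noncomputable def JJ (d : ℕ → ℕ) : ℕ → ℤ
  | 0 => 0
  | (k+1) => ⌈(qq n K (k+1) : ℝ) * (((JJ d k : ℝ) + δ) / (qq n K k : ℝ)) - δ⌉ + 1 + d k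

/-- left endpoints of nested intervals -/
noncomputable def aa (d : ℕ → ℕ) (k : ℕ) : ℝ := ((JJ δ n K d k : ℝ) + δ) / (qq n K k : ℝ)

/-- the limit point -/
noncomputable def Phi (d : ℕ → ℕ) : ℝ := ⨆ k, aa δ n K d k

/-- the coding value -/
noncomputable def GG (d : ℕ → ℕ) : ℝ := ∑' j, (d j : ℝ) / (MM δ n K (j+1) : ℝ)

/-- partial coding sums -/
noncomputable def PP (d : ℕ → ℕ) (k : ℕ) : ℝ :=
  ∑ j ∈ Finset.range k, (d j : ℝ) / (MM δ n K (j+1) : ℝ)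

/-- digit sequences -/
def Dset : Set (ℕ → ℕ) := {d | ∀ j, d j < mm δ n K j}

end Aux

section Lem

variable {δ : ℝ} {n : ℕ → ℕ} {K : ℕ}
variable (hδ0 : 0 < δ) (hδ : δ < 1/2) (hpos : ∀ k, 0 < n k)
variable (h4 : ∀ k, 4 * (qq n K k : ℝ) ≤ (1 - 2*δ) * (qq n K (k+1) : ℝ))

theorem hq (hpos : ∀ k, 0 < n k) (k : ℕ) : (0:ℝ) < (qq n K k : ℝ) := by
  exact_mod_cast hpos (K+k)

include hδ hpos h4 in
theorem mm2 (k : ℕ) : 2 ≤ mm δ n K k := by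
  have hqk := hq hpos (K := K) k
  have hqk1 := hq hpos (K := K) (k+1)
  have hnum : (0:ℝ) ≤ (1 - 2*δ) * (qq n K (k+1) : ℝ) / (2 * (qq n K k : ℝ)) := by
    have : (0:ℝ) < 1 - 2*δ := by linarith
    positivity
  rw [mm, Nat.le_floor_iff hnum]
  rw [le_div_iff₀ (by positivity)]
  push_cast
  have := h4 k
  nlinarith

include hδ hpos in
theorem mm_le (k : ℕ) : (mm δ n K k : ℝ) ≤ (1 - 2*δ) * (qq n K (k+1) : ℝ) / (2 * (qq n K k : ℝ)) :=
  Nat.floor_le (by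
    have : (0:ℝ) < 1 - 2*δ := by linarith
    have := hq hpos (K := K) (k+1)
    have := hq hpos (K := K) k
    positivity)

include hδ hpos h4 in
theorem mm_ge (k : ℕ) :
    (1 - 2*δ) * (qq n K (k+1) : ℝ) / (4 * (qq n K k : ℝ)) ≤ (mm δ n K k : ℝ) := by
  have hqk := hq hpos (K := K) k
  have h2 : (2:ℝ) ≤ (1 - 2*δ) * (qq n K (k+1) : ℝ) / (2 * (qq n K k : ℝ)) := by
    rw [le_div_iff₀ (by positivity)]
    have := h4 k; nlinarith
  have h3 : (1 - 2*δ) * (qq n K (k+1) : ℝ) / (2 * (qq n K k : ℝ)) - 1 < (mm δ n K k : ℝ) := by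
    have := Nat.sub_one_lt_floor ((1 - 2*δ) * (qq n K (k+1) : ℝ) / (2 * (qq n K k : ℝ)))
    simpa [mm] using this
  have heq : (1 - 2*δ) * (qq n K (k+1) : ℝ) / (4 * (qq n K k : ℝ))
      = ((1 - 2*δ) * (qq n K (k+1) : ℝ) / (2 * (qq n K k : ℝ))) / 2 := by
    rw [div_div]; congr 1; ring
  rw [heq]
  linarith

theorem MM_succ (k : ℕ) : MM δ n K (k+1) = MM δ n K k * mm δ n K k :=
  Finset.prod_range_succ _ _

include hδ hpos h4 in
theorem MM_ge_pow (k : ℕ) : 2^k ≤ MM δ n K k := by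
  induction k with
  | zero => simp [MM]
  | succ k ih =>
    rw [MM_succ, pow_succ]
    exact Nat.mul_le_mul ih (mm2 hδ hpos h4 k)

include hδ hpos h4 in
theorem MM_pos (k : ℕ) : 0 < MM δ n K k :=
  lt_of_lt_of_le (by positivity : 0 < 2^k) (MM_ge_pow hδ hpos h4 k)

include hδ hpos h4 in
theorem MM_one_le (k : ℕ) : (1:ℝ) ≤ (MM δ n K k : ℝ) := by
  exact_mod_cast Nat.one_le_iff_ne_zero.mpr (MM_pos hδ hpos h4 k).ne'

include hδ hpos h4 in
theorem MM_ge_c (k : ℕ) :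
    ((1 - 2*δ)/4)^k * ((qq n K k : ℝ) / (qq n K 0 : ℝ)) ≤ (MM δ n K k : ℝ) := by
  induction k with
  | zero => simp [MM, div_self (ne_of_gt (hq hpos (K := K) 0))]
  | succ k ih =>
    have hqk := hq hpos (K := K) k
    have hqk1 := hq hpos (K := K) (k+1)
    have hq0 := hq hpos (K := K) 0
    have hne : (qq n K k : ℝ) ≠ 0 := ne_of_gt hqk
    have hne0 : (qq n K 0 : ℝ) ≠ 0 := ne_of_gt hq0
    have hc : (0:ℝ) < (1 - 2*δ)/4 := by linarith
    have hm := mm_ge hδ hpos h4 (K := K) k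
    have key : ((1 - 2*δ)/4)^(k+1) * ((qq n K (k+1) : ℝ) / (qq n K 0 : ℝ))
        = (((1 - 2*δ)/4)^k * ((qq n K k : ℝ) / (qq n K 0 : ℝ)))
          * ((1 - 2*δ) * (qq n K (k+1) : ℝ) / (4 * (qq n K k : ℝ))) := by
      rw [pow_succ]
      field_simp
    rw [key, MM_succ]
    push_cast
    have h1 : (0:ℝ) ≤ ((1 - 2*δ)/4)^k * ((qq n K k : ℝ) / (qq n K 0 : ℝ)) := by positivity
    have h2 : (0:ℝ) ≤ (1 - 2*δ) * (qq n K (k+1) : ℝ) / (4 * (qq n K k : ℝ)) := by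
      have : (0:ℝ) < 1 - 2*δ := by linarith
      positivity
    exact mul_le_mul ih hm h2 (le_trans h1 ih)

theorem aa_zero (d : ℕ → ℕ) : aa δ n K d 0 = δ / (qq n K 0 : ℝ) := by
  simp [aa, JJ]

theorem aa_succ (d : ℕ → ℕ) (k : ℕ) :
    aa δ n K d (k+1)
      = ((⌈(qq n K (k+1) : ℝ) * aa δ n K d k - δ⌉ : ℝ) + 1 + (d k : ℝ) + δ) / (qq n K (k+1) : ℝ) := by
  show ((JJ δ n K d (k+1) : ℝ) + δ) / (qq n K (k+1) : ℝ) = _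
  rw [JJ]
  push_cast
  rw [aa]

include hpos in
theorem aa_step1 (d : ℕ → ℕ) (k : ℕ) :
    aa δ n K d k + (1 + (d k : ℝ))/(qq n K (k+1) : ℝ) ≤ aa δ n K d (k+1) := by
  have hqk1 := hq hpos (K := K) (k+1)
  have hceil : (qq n K (k+1) : ℝ) * aa δ n K d k - δ ≤ (⌈(qq n K (k+1) : ℝ) * aa δ n K d k - δ⌉ : ℝ) :=
    Int.le_ceil _
  have hexp : (aa δ n K d k + (1 + (d k : ℝ))/(qq n K (k+1) : ℝ)) * (qq n K (k+1) : ℝ)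
      = aa δ n K d k * (qq n K (k+1) : ℝ) + 1 + (d k : ℝ) := by
    field_simp; ring
  rw [aa_succ, le_div_iff₀ hqk1, hexp]
  nlinarith [hceil]

include hδ0 hδ hpos h4 in
theorem aa_step2 (d : ℕ → ℕ) (k : ℕ) (hdk : d k < mm δ n K k) :
    aa δ n K d (k+1) + (1 - 2*δ)/(qq n K (k+1) : ℝ) < aa δ n K d k + (1 - 2*δ)/(qq n K k : ℝ) := by
  have hqk := hq hpos (K := K) k
  have hqk1 := hq hpos (K := K) (k+1)
  have hceil : (⌈(qq n K (k+1) : ℝ) * aa δ n K d k - δ⌉ : ℝ) < (qq n K (k+1) : ℝ) * aa δ n K d k - δ + 1 :=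
    Int.ceil_lt_add_one _
  have hd' : (d k : ℝ) ≤ (mm δ n K k : ℝ) - 1 := by
    have : (d k : ℝ) + 1 ≤ (mm δ n K k : ℝ) := by exact_mod_cast hdk
    linarith
  have hmle := mm_le hδ hpos (K := K) k
  have hmle' : (mm δ n K k : ℝ) * (2 * (qq n K k : ℝ)) ≤ (1 - 2*δ) * (qq n K (k+1) : ℝ) := by
    rw [le_div_iff₀ (by positivity)] at hmle
    linarith
  have h4' := h4 k
  have hkey : ((mm δ n K k : ℝ) + 2) * (qq n K k : ℝ) ≤ (1 - 2*δ) * (qq n K (k+1) : ℝ) := by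
    nlinarith [hmle', h4']
  have hkey2 : ((mm δ n K k : ℝ) + 2) ≤ (1 - 2*δ)/(qq n K k : ℝ) * (qq n K (k+1) : ℝ) := by
    rw [div_mul_eq_mul_div, le_div_iff₀ hqk]
    linarith
  rw [aa_succ, ← add_div, div_lt_iff₀ hqk1]
  have hexp : (aa δ n K d k + (1 - 2*δ)/(qq n K k : ℝ)) * (qq n K (k+1) : ℝ)
      = aa δ n K d k * (qq n K (k+1) : ℝ) + (1 - 2*δ)/(qq n K k : ℝ) * (qq n K (k+1) : ℝ) := by
    ring
  rw [hexp]
  nlinarith [hceil, hd', hkey2, hδ0]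

include hpos in
theorem aa_mono (d : ℕ → ℕ) : Monotone (aa δ n K d) := by
  apply monotone_nat_of_le_succ
  intro k
  have h1 := aa_step1 hpos (K := K) (δ := δ) d k
  have hqk1 := hq hpos (K := K) (k+1)
  have : (0:ℝ) ≤ (1 + (d k : ℝ))/(qq n K (k+1) : ℝ) := by positivity
  linarith

include hδ0 hδ hpos h4 in
theorem aa_nest (d : ℕ → ℕ) (hd : d ∈ Dset δ n K) :
    ∀ k l, k ≤ l →
      aa δ n K d l + (1 - 2*δ)/(qq n K l : ℝ) ≤ aa δ n K d k + (1 - 2*δ)/(qq n K k : ℝ) := by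
  intro k l hkl
  induction l, hkl using Nat.le_induction with
  | base => exact le_refl _
  | succ l hkl ih =>
    have := aa_step2 hδ0 hδ hpos h4 d l (hd l)
    linarith

include hδ0 hδ hpos h4 in
theorem aa_bdd (d : ℕ → ℕ) (hd : d ∈ Dset δ n K) :
    BddAbove (Set.range (aa δ n K d)) := by
  refine ⟨aa δ n K d 0 + (1 - 2*δ)/(qq n K 0 : ℝ), ?_⟩
  rintro x ⟨k, rfl⟩
  have h1 := aa_nest hδ0 hδ hpos h4 d hd 0 k (Nat.zero_le k)
  have hqk := hq hpos (K := K) k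
  have : (0:ℝ) < (1 - 2*δ)/(qq n K k : ℝ) := by
    have : (0:ℝ) < 1 - 2*δ := by linarith
    positivity
  linarith

include hδ0 hδ hpos h4 in
theorem Phi_gt (d : ℕ → ℕ) (hd : d ∈ Dset δ n K) (k : ℕ) :
    aa δ n K d k < Phi δ n K d := by
  have hb := aa_bdd hδ0 hδ hpos h4 d hd
  have h1 := le_ciSup hb (k+1)
  have h2 := aa_step1 hpos (K := K) (δ := δ) d k
  have hqk1 := hq hpos (K := K) (k+1)
  have : (0:ℝ) < (1 + (d k : ℝ))/(qq n K (k+1) : ℝ) := by positivity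
  calc aa δ n K d k < aa δ n K d (k+1) := by linarith
  _ ≤ Phi δ n K d := h1

include hδ0 hδ hpos h4 in
theorem Phi_le (d : ℕ → ℕ) (hd : d ∈ Dset δ n K) (k : ℕ) :
    Phi δ n K d ≤ aa δ n K d k + (1 - 2*δ)/(qq n K k : ℝ) := by
  apply ciSup_le
  intro i
  rcases le_total i k with h | h
  · have := aa_mono hpos (K := K) (δ := δ) d h
    have hqk := hq hpos (K := K) k
    have : (0:ℝ) < (1 - 2*δ)/(qq n K k : ℝ) := by
      have : (0:ℝ) < 1 - 2*δ := by linarith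
      positivity
    linarith
  · have := aa_nest hδ0 hδ hpos h4 d hd k i h
    have hqi := hq hpos (K := K) i
    have : (0:ℝ) < (1 - 2*δ)/(qq n K i : ℝ) := by
      have : (0:ℝ) < 1 - 2*δ := by linarith
      positivity
    linarith

include hδ0 hδ hpos h4 in
theorem Phi_lt (d : ℕ → ℕ) (hd : d ∈ Dset δ n K) (k : ℕ) :
    Phi δ n K d < aa δ n K d k + (1 - 2*δ)/(qq n K k : ℝ) := by
  have h1 := Phi_le hδ0 hδ hpos h4 d hd (k+1)
  have h2 := aa_step2 hδ0 hδ hpos h4 d k (hd k)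
  linarith

theorem nint_gt {δ y : ℝ} {J : ℤ} (hδ0 : 0 < δ) (h1 : (J:ℝ) + δ < y) (h2 : y < (J:ℝ) + 1 - δ) :
    δ < nint y := by
  rw [nint]
  rcases le_or_gt (round y) J with h | h
  · have : ((round y : ℤ) : ℝ) ≤ (J : ℝ) := by exact_mod_cast h
    have : δ < y - round y := by linarith
    exact lt_of_lt_of_le this (le_abs_self _)
  · have : (J : ℝ) + 1 ≤ ((round y : ℤ) : ℝ) := by exact_mod_cast h
    have : δ < (round y : ℝ) - y := by linarith
    calc δ < (round y : ℝ) - y := this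
    _ = -(y - round y) := by ring
    _ ≤ |y - round y| := neg_le_abs _

include hδ0 hδ hpos h4 in
theorem Phi_nint (d : ℕ → ℕ) (hd : d ∈ Dset δ n K) (k : ℕ) :
    δ < nint ((qq n K k : ℝ) * Phi δ n K d) := by
  have hqk := hq hpos (K := K) k
  have hgt := Phi_gt hδ0 hδ hpos h4 d hd k
  have hlt := Phi_lt hδ0 hδ hpos h4 d hd k
  rw [aa] at hgt hlt
  apply nint_gt (J := JJ δ n K d k) hδ0
  · rw [div_lt_iff₀ hqk] at hgt
    nlinarith
  · rw [← add_div, lt_div_iff₀ hqk] at hlt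
    nlinarith

include hδ0 hδ hpos h4 in
theorem Phi_mem_Icc (d : ℕ → ℕ) (hd : d ∈ Dset δ n K) :
    Phi δ n K d ∈ Set.Icc (0:ℝ) 1 := by
  have hq0 := hq hpos (K := K) 0
  have hq0' : (1:ℝ) ≤ (qq n K 0 : ℝ) := by exact_mod_cast hpos (K+0)
  have hgt := Phi_gt hδ0 hδ hpos h4 d hd 0
  have hlt := Phi_lt hδ0 hδ hpos h4 d hd 0
  rw [aa_zero] at hgt hlt
  constructor
  · have : (0:ℝ) < δ / (qq n K 0 : ℝ) := by positivity
    linarith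
  · have h1 : δ / (qq n K 0 : ℝ) + (1 - 2*δ)/(qq n K 0 : ℝ) = (1 - δ)/(qq n K 0 : ℝ) := by
      rw [← add_div]; congr 1; ring
    have h2 : (1 - δ)/(qq n K 0 : ℝ) ≤ 1 := by
      rw [div_le_one hq0]; linarith
    linarith [hlt, h1 ▸ hlt]

theorem JJ_agree (d e : ℕ → ℕ) (k : ℕ) (hagree : ∀ j < k, d j = e j) :
    ∀ j, j ≤ k → JJ δ n K d j = JJ δ n K e j := by
  intro j hj
  induction j with
  | zero => rfl
  | succ j ih =>
    rw [JJ, JJ, ih (le_trans (Nat.le_succ j) hj), hagree j (Nat.lt_of_succ_le hj)]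

include hδ0 hδ hpos h4 in
theorem Phi_sep (d e : ℕ → ℕ) (hd : d ∈ Dset δ n K) (he : e ∈ Dset δ n K) (k : ℕ)
    (hagree : ∀ j < k, d j = e j) (hlt : d k < e k) :
    2*δ*((e k : ℝ) - (d k : ℝ))/(qq n K (k+1) : ℝ) ≤ Phi δ n K e - Phi δ n K d := by
  have hqk1 := hq hpos (K := K) (k+1)
  have haaeq : aa δ n K d k = aa δ n K e k := by
    rw [aa, aa, JJ_agree d e k hagree k (le_refl k)]
  have haek : aa δ n K e (k+1) = aa δ n K d (k+1) + ((e k : ℝ) - (d k : ℝ))/(qq n K (k+1) : ℝ) := by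
    rw [aa_succ, aa_succ, haaeq, ← add_div]
    congr 1; ring
  have h1 : aa δ n K e (k+1) ≤ Phi δ n K e := le_of_lt (Phi_gt hδ0 hδ hpos h4 e he (k+1))
  have h2 := Phi_le hδ0 hδ hpos h4 d hd (k+1)
  have hu : (1:ℝ) ≤ (e k : ℝ) - (d k : ℝ) := by
    have : (d k : ℝ) + 1 ≤ (e k : ℝ) := by exact_mod_cast hlt
    linarith
  have hstep : 2*δ*((e k : ℝ) - (d k : ℝ))/(qq n K (k+1) : ℝ) + (1 - 2*δ)/(qq n K (k+1) : ℝ)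
      ≤ ((e k : ℝ) - (d k : ℝ))/(qq n K (k+1) : ℝ) := by
    rw [← add_div, div_le_div_iff_of_pos_right hqk1]
    nlinarith [hu, hδ0, hδ]
  linarith [haek ▸ h1, h2, hstep]

include hδ0 hδ hpos h4 in
theorem Phi_injOn : Set.InjOn (Phi δ n K) (Dset δ n K) := by
  intro d hd e he hPhi
  by_contra hne
  have hex : ∃ k, d k ≠ e k := by
    by_contra hc
    push_neg at hc
    exact hne (funext hc)
  set k := Nat.find hex with hk
  have hspec : d k ≠ e k := Nat.find_spec hex
  have hagree : ∀ j < k, d j = e j := fun j hj => not_not.mp (Nat.find_min hex hj)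
  have hqk1 := hq hpos (K := K) (k+1)
  rcases lt_or_gt_of_ne hspec with h | h
  · have hsep := Phi_sep hδ0 hδ hpos h4 d e hd he k hagree h
    have hu : (1:ℝ) ≤ (e k : ℝ) - (d k : ℝ) := by
      have : (d k : ℝ) + 1 ≤ (e k : ℝ) := by exact_mod_cast h
      linarith
    have hp : (0:ℝ) < 2*δ*((e k : ℝ) - (d k : ℝ))/(qq n K (k+1) : ℝ) := by positivity
    have h0 : Phi δ n K e - Phi δ n K d = 0 := by rw [hPhi]; ring
    linarith
  · have hagree' : ∀ j < k, e j = d j := fun j hj => (hagree j hj).symm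
    have hu : (1:ℝ) ≤ (d k : ℝ) - (e k : ℝ) := by
      have : (e k : ℝ) + 1 ≤ (d k : ℝ) := by exact_mod_cast h
      linarith
    have hsep := Phi_sep hδ0 hδ hpos h4 e d he hd k hagree' h
    have hp : (0:ℝ) < 2*δ*((d k : ℝ) - (e k : ℝ))/(qq n K (k+1) : ℝ) := by positivity
    have h0 : Phi δ n K d - Phi δ n K e = 0 := by rw [hPhi]; ring
    linarith

include hδ hpos h4 in
theorem one_div_MM_le (k : ℕ) : 1/(MM δ n K k : ℝ) ≤ (1/2)^k := by
  have h1 : ((2:ℝ))^k ≤ (MM δ n K k : ℝ) := by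
    exact_mod_cast MM_ge_pow hδ hpos h4 (K := K) k
  have h2 : (0:ℝ) < 2^k := by positivity
  rw [one_div_pow, div_le_div_iff₀ (lt_of_lt_of_le h2 h1) h2]
  nlinarith

include hδ hpos h4 in
theorem term_le_tel (d : ℕ → ℕ) (j : ℕ) (hdj : d j < mm δ n K j) :
    (d j : ℝ)/(MM δ n K (j+1) : ℝ) ≤ 1/(MM δ n K j : ℝ) - 1/(MM δ n K (j+1) : ℝ) := by
  have hMj := MM_one_le hδ hpos h4 (K := K) j
  have hMj1 := MM_one_le hδ hpos h4 (K := K) (j+1)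
  have hd' : (d j : ℝ) ≤ (mm δ n K j : ℝ) - 1 := by
    have : (d j : ℝ) + 1 ≤ (mm δ n K j : ℝ) := by exact_mod_cast hdj
    linarith
  have hMs : (MM δ n K (j+1) : ℝ) = (MM δ n K j : ℝ) * (mm δ n K j : ℝ) := by
    exact_mod_cast congrArg (Nat.cast (R := ℝ)) (MM_succ (δ := δ) (n := n) (K := K) j)
  have hMjpos : (0:ℝ) < (MM δ n K j : ℝ) := by linarith
  have hMj1pos : (0:ℝ) < (MM δ n K (j+1) : ℝ) := by linarith
  have hmpos : (0:ℝ) < (mm δ n K j : ℝ) := by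
    have := mm2 hδ hpos h4 (K := K) j
    exact_mod_cast lt_of_lt_of_le (by norm_num : (0:ℕ) < 2) this
  have hrhs : 1/(MM δ n K j : ℝ) - 1/(MM δ n K (j+1) : ℝ)
      = ((mm δ n K j : ℝ) - 1)/(MM δ n K (j+1) : ℝ) := by
    rw [hMs]
    field_simp
  rw [hrhs, div_le_div_iff_of_pos_right hMj1pos]
  exact hd'

include hδ hpos h4 in
theorem GG_summable (d : ℕ → ℕ) (hd : d ∈ Dset δ n K) :
    Summable (fun j => (d j : ℝ) / (MM δ n K (j+1) : ℝ)) := by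
  apply Summable.of_nonneg_of_le (fun j => by positivity) (fun j => ?_) summable_geometric_two
  have h1 := term_le_tel hδ hpos h4 d j (hd j)
  have h2 := one_div_MM_le hδ hpos h4 (K := K) j
  have h3 : (0:ℝ) ≤ 1/(MM δ n K (j+1) : ℝ) := by positivity
  linarith

include hδ hpos h4 in
theorem PP_le_GG (d : ℕ → ℕ) (hd : d ∈ Dset δ n K) (k : ℕ) :
    PP δ n K d k ≤ GG δ n K d := by
  exact Summable.sum_le_tsum (Finset.range k) (fun j _ => by positivity) (GG_summable hδ hpos h4 d hd)

include hδ hpos h4 in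
theorem GG_le_PP_add (d : ℕ → ℕ) (hd : d ∈ Dset δ n K) (k : ℕ) :
    GG δ n K d ≤ PP δ n K d k + 1/(MM δ n K k : ℝ) := by
  apply Real.tsum_le_of_sum_range_le (fun j => by positivity)
  intro N
  rcases le_total N k with h | h
  · have h1 : ∑ j ∈ Finset.range N, (d j : ℝ)/(MM δ n K (j+1) : ℝ) ≤ PP δ n K d k := by
      apply Finset.sum_le_sum_of_subset_of_nonneg (Finset.range_subset_range.mpr h)
      intro j _ _; positivity
    have h2 : (0:ℝ) ≤ 1/(MM δ n K k : ℝ) := by positivity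
    linarith
  · have hsplit : ∑ j ∈ Finset.range N, (d j : ℝ)/(MM δ n K (j+1) : ℝ)
        = PP δ n K d k + ∑ j ∈ Finset.Ico k N, (d j : ℝ)/(MM δ n K (j+1) : ℝ) := by
      rw [PP, Finset.sum_range_add_sum_Ico _ h]
    rw [hsplit]
    have htail : ∑ j ∈ Finset.Ico k N, (d j : ℝ)/(MM δ n K (j+1) : ℝ)
        ≤ ∑ j ∈ Finset.Ico k N, (1/(MM δ n K j : ℝ) - 1/(MM δ n K (j+1) : ℝ)) := by
      apply Finset.sum_le_sum
      intro j _
      exact term_le_tel hδ hpos h4 d j (hd j)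
    have htel : ∑ j ∈ Finset.Ico k N, (1/(MM δ n K j : ℝ) - 1/(MM δ n K (j+1) : ℝ))
        = 1/(MM δ n K k : ℝ) - 1/(MM δ n K N : ℝ) := by
      rw [Finset.sum_Ico_eq_sum_range]
      have : ∀ i, 1/(MM δ n K (k+i) : ℝ) - 1/(MM δ n K (k+i+1) : ℝ)
          = (fun i => 1/(MM δ n K (k+i) : ℝ)) i - (fun i => 1/(MM δ n K (k+i) : ℝ)) (i+1) := by
        intro i
        simp only []
        rw [← Nat.add_assoc]
      simp only [this]
      rw [Finset.sum_range_sub' (fun i => 1/(MM δ n K (k+i) : ℝ))]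
      simp only [Nat.add_zero]
      rw [Nat.add_sub_cancel' h]
    have hN : (0:ℝ) ≤ 1/(MM δ n K N : ℝ) := by positivity
    linarith [htail, htel ▸ htail]

include hδ hpos h4 in
theorem GG_nonneg (d : ℕ → ℕ) : (0:ℝ) ≤ GG δ n K d :=
  tsum_nonneg (fun j => by positivity)

include hδ hpos h4 in
theorem GG_le_one (d : ℕ → ℕ) (hd : d ∈ Dset δ n K) : GG δ n K d ≤ 1 := by
  have := GG_le_PP_add hδ hpos h4 d hd 0
  simpa [PP, MM] using this

theorem PP_diff (d e : ℕ → ℕ) (k : ℕ) (hagree : ∀ j < k, d j = e j) :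
    PP δ n K e (k+1) - PP δ n K d (k+1) = ((e k : ℝ) - (d k : ℝ))/(MM δ n K (k+1) : ℝ) := by
  rw [PP, PP, Finset.sum_range_succ, Finset.sum_range_succ]
  have heq : ∑ j ∈ Finset.range k, (e j : ℝ)/(MM δ n K (j+1) : ℝ)
      = ∑ j ∈ Finset.range k, (d j : ℝ)/(MM δ n K (j+1) : ℝ) := by
    apply Finset.sum_congr rfl
    intro j hj
    rw [hagree j (Finset.mem_range.mp hj)]
  rw [heq, sub_div]
  ring

include hδ hpos h4 in
theorem GG_diff (d e : ℕ → ℕ) (hd : d ∈ Dset δ n K) (he : e ∈ Dset δ n K) (k : ℕ)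
    (hagree : ∀ j < k, d j = e j) (hlt : d k < e k) :
    |GG δ n K d - GG δ n K e| ≤ 2*((e k : ℝ) - (d k : ℝ))/(MM δ n K (k+1) : ℝ) := by
  have h1 := PP_le_GG hδ hpos h4 d hd (k+1)
  have h2 := GG_le_PP_add hδ hpos h4 d hd (k+1)
  have h3 := PP_le_GG hδ hpos h4 e he (k+1)
  have h4' := GG_le_PP_add hδ hpos h4 e he (k+1)
  have hdiff := PP_diff (δ := δ) (n := n) (K := K) d e k hagree
  have hu : (1:ℝ) ≤ (e k : ℝ) - (d k : ℝ) := by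
    have : (d k : ℝ) + 1 ≤ (e k : ℝ) := by exact_mod_cast hlt
    linarith
  have hM1 := MM_one_le hδ hpos h4 (K := K) (k+1)
  have hMpos : (0:ℝ) < (MM δ n K (k+1) : ℝ) := by linarith
  have hkey : 1/(MM δ n K (k+1) : ℝ) ≤ ((e k : ℝ) - (d k : ℝ))/(MM δ n K (k+1) : ℝ) := by
    rw [div_le_div_iff_of_pos_right hMpos]
    exact hu
  rw [abs_le]
  constructor
  · have : ((e k : ℝ) - (d k : ℝ))/(MM δ n K (k+1) : ℝ) + 1/(MM δ n K (k+1) : ℝ)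
        ≤ 2*((e k : ℝ) - (d k : ℝ))/(MM δ n K (k+1) : ℝ) := by
      rw [← add_div, div_le_div_iff_of_pos_right hMpos]
      linarith
    linarith
  · have hpos1 : (0:ℝ) ≤ ((e k : ℝ) - (d k : ℝ))/(MM δ n K (k+1) : ℝ) := by positivity
    have : GG δ n K d - GG δ n K e ≤ 1/(MM δ n K (k+1) : ℝ) - ((e k : ℝ) - (d k : ℝ))/(MM δ n K (k+1) : ℝ) := by
      linarith
    have h2M : 1/(MM δ n K (k+1) : ℝ) ≤ 2*((e k : ℝ) - (d k : ℝ))/(MM δ n K (k+1) : ℝ) := by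
      rw [div_le_div_iff_of_pos_right hMpos]
      linarith
    linarith

end Lem

section Aux2

variable (δ : ℝ) (n : ℕ → ℕ) (K : ℕ)

/-- remainders in the greedy mixed-radix expansion -/
noncomputable def yrec (y : ℝ) : ℕ → ℝ
  | 0 => y
  | (j+1) => Int.fract ((mm δ n K j : ℝ) * yrec y j)

/-- digits of the greedy mixed-radix expansion -/
noncomputable def dig (y : ℝ) (j : ℕ) : ℕ := ⌊(mm δ n K j : ℝ) * yrec δ n K y j⌋₊

end Aux2

section Lem2

variable {δ : ℝ} {n : ℕ → ℕ} {K : ℕ}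
variable (hδ0 : 0 < δ) (hδ : δ < 1/2) (hpos : ∀ k, 0 < n k)
variable (h4 : ∀ k, 4 * (qq n K k : ℝ) ≤ (1 - 2*δ) * (qq n K (k+1) : ℝ))

theorem yrec_mem {y : ℝ} (hy : y ∈ Set.Ico (0:ℝ) 1) (j : ℕ) :
    yrec δ n K y j ∈ Set.Ico (0:ℝ) 1 := by
  induction j with
  | zero => exact hy
  | succ j _ => exact ⟨Int.fract_nonneg _, Int.fract_lt_one _⟩

include hδ hpos h4 in
theorem dig_lt {y : ℝ} (hy : y ∈ Set.Ico (0:ℝ) 1) (j : ℕ) :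
    dig δ n K y j < mm δ n K j := by
  have hyj := yrec_mem (δ := δ) (n := n) (K := K) hy j
  have hmpos : (0:ℝ) < (mm δ n K j : ℝ) := by
    have := mm2 hδ hpos h4 (K := K) j
    exact_mod_cast lt_of_lt_of_le (by norm_num : (0:ℕ) < 2) this
  rw [dig, Nat.floor_lt (by nlinarith [hyj.1])]
  nlinarith [hyj.2]

include hδ hpos h4 in
theorem dig_mem {y : ℝ} (hy : y ∈ Set.Ico (0:ℝ) 1) : dig δ n K y ∈ Dset δ n K :=
  fun j => dig_lt hδ hpos h4 hy j

include hδ hpos h4 in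
theorem expansion {y : ℝ} (hy : y ∈ Set.Ico (0:ℝ) 1) (N : ℕ) :
    y = PP δ n K (dig δ n K y) N + yrec δ n K y N / (MM δ n K N : ℝ) := by
  induction N with
  | zero => simp [PP, MM, yrec]
  | succ N ih =>
    have hyN := yrec_mem (δ := δ) (n := n) (K := K) hy N
    have hMs : (MM δ n K (N+1) : ℝ) = (MM δ n K N : ℝ) * (mm δ n K N : ℝ) := by
      exact_mod_cast congrArg (Nat.cast (R := ℝ)) (MM_succ (δ := δ) (n := n) (K := K) N)
    have hMpos : (0:ℝ) < (MM δ n K N : ℝ) := by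
      linarith [MM_one_le hδ hpos h4 (K := K) N]
    have hmpos : (0:ℝ) < (mm δ n K N : ℝ) := by
      have := mm2 hδ hpos h4 (K := K) N
      exact_mod_cast lt_of_lt_of_le (by norm_num : (0:ℕ) < 2) this
    have hfl : ((dig δ n K y N : ℕ) : ℝ) = (⌊(mm δ n K N : ℝ) * yrec δ n K y N⌋ : ℝ) := by
      rw [dig]
      have h0 : (0:ℝ) ≤ (mm δ n K N : ℝ) * yrec δ n K y N := by nlinarith [hyN.1]
      exact_mod_cast Int.natCast_floor_eq_floor h0
    have hkey : yrec δ n K y N / (MM δ n K N : ℝ)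
        = (dig δ n K y N : ℝ)/(MM δ n K (N+1) : ℝ) + yrec δ n K y (N+1) / (MM δ n K (N+1) : ℝ) := by
      have hfr : yrec δ n K y (N+1) = (mm δ n K N : ℝ) * yrec δ n K y N
          - (⌊(mm δ n K N : ℝ) * yrec δ n K y N⌋ : ℝ) := by
        rw [yrec, Int.fract]
      rw [hfr, hfl, hMs]
      field_simp
      ring
    rw [PP, Finset.sum_range_succ, ← PP]
    rw [hkey] at ih
    linarith [ih]

include hδ hpos h4 in
theorem GG_dig {y : ℝ} (hy : y ∈ Set.Ico (0:ℝ) 1) : GG δ n K (dig δ n K y) = y := by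
  have hsum := GG_summable hδ hpos h4 (dig δ n K y) (dig_mem hδ hpos h4 hy)
  have htend : Tendsto (fun N => PP δ n K (dig δ n K y) N) atTop (nhds (GG δ n K (dig δ n K y))) :=
    hsum.hasSum.tendsto_sum_nat
  have htend2 : Tendsto (fun N => PP δ n K (dig δ n K y) N) atTop (nhds y) := by
    have heq : ∀ N, PP δ n K (dig δ n K y) N = y - yrec δ n K y N / (MM δ n K N : ℝ) := by
      intro N
      have := expansion hδ hpos h4 hy (K := K) N
      linarith
    simp only [heq]
    have h0 : Tendsto (fun N => yrec δ n K y N / (MM δ n K N : ℝ)) atTop (nhds 0) := by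
      apply squeeze_zero (g := fun N => ((1:ℝ)/2)^N) (fun N => ?_) (fun N => ?_)
        (tendsto_pow_atTop_nhds_zero_of_lt_one (by norm_num) (by norm_num))
      · have hyN := yrec_mem (δ := δ) (n := n) (K := K) hy N
        have hMpos : (0:ℝ) < (MM δ n K N : ℝ) := by
          linarith [MM_one_le hδ hpos h4 (K := K) N]
        exact div_nonneg hyN.1 (le_of_lt hMpos)
      · have hyN := yrec_mem (δ := δ) (n := n) (K := K) hy N
        have hMpos : (0:ℝ) < (MM δ n K N : ℝ) := by
          linarith [MM_one_le hδ hpos h4 (K := K) N]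
        have h1 : yrec δ n K y N / (MM δ n K N : ℝ) ≤ 1/(MM δ n K N : ℝ) := by
          rw [div_le_div_iff_of_pos_right hMpos]
          linarith [hyN.2]
        linarith [one_div_MM_le hδ hpos h4 (K := K) N]
    have : Tendsto (fun N => y - yrec δ n K y N / (MM δ n K N : ℝ)) atTop (nhds (y - 0)) :=
      tendsto_const_nhds.sub h0
    simpa using this
  exact tendsto_nhds_unique htend htend2

include hδ0 hδ hpos h4 in
theorem Cbound {r : ℝ} (hr0 : 0 < r) (hr1 : r < 1)
    (hbig : ∀ᶠ k in atTop, (1/((1-2*δ)/4))^(k+1) ≤ (qq n K k : ℝ)^(1-r)) :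
    ∃ C : ℝ, 1 ≤ C ∧ ∀ k,
      2 * (mm δ n K k : ℝ)^(1-r) * (qq n K (k+1) : ℝ)^r
        ≤ C * ((2*δ)^r * (MM δ n K (k+1) : ℝ)) := by
  have hε : (0:ℝ) < 1 - 2*δ := by linarith
  set c : ℝ := (1-2*δ)/4 with hc
  have hcpos : 0 < c := by positivity
  have hq0 := hq hpos (K := K) 0
  obtain ⟨N, hN⟩ := eventually_atTop.mp hbig
  set F : ℕ → ℝ := fun k =>
    2 * (mm δ n K k : ℝ)^(1-r) * (qq n K (k+1) : ℝ)^r / ((2*δ)^r * (MM δ n K (k+1) : ℝ)) with hF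
  have hden : ∀ k, (0:ℝ) < (2*δ)^r * (MM δ n K (k+1) : ℝ) := by
    intro k
    have := MM_one_le hδ hpos h4 (K := K) (k+1)
    have h2δ : (0:ℝ) < 2*δ := by linarith
    have : (0:ℝ) < (2*δ)^r := Real.rpow_pos_of_pos h2δ r
    nlinarith
  set A : ℝ := 2 * (qq n K 0 : ℝ) / (2*δ)^r with hA
  have hAk : ∀ k ≥ N, F k ≤ A := by
    intro k hk
    have hqk := hq hpos (K := K) k
    have hqk1 := hq hpos (K := K) (k+1)
    have h2δ : (0:ℝ) < 2*δ := by linarith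
    have hbigk := hN k hk
    -- m ≤ q'/q
    have hm_le : (mm δ n K k : ℝ) ≤ (qq n K (k+1) : ℝ)/(qq n K k : ℝ) := by
      have h1 := mm_le hδ hpos (K := K) k
      have h2 : (1 - 2*δ) * (qq n K (k+1) : ℝ) / (2 * (qq n K k : ℝ))
          ≤ (qq n K (k+1) : ℝ)/(qq n K k : ℝ) := by
        rw [div_le_div_iff₀ (by positivity) hqk]
        have h2' : (1 - 2*δ) ≤ 2 := by linarith
        nlinarith [mul_pos hqk1 hqk]
      linarith
    have hm0 : (0:ℝ) ≤ (mm δ n K k : ℝ) := Nat.cast_nonneg _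
    -- step 1 : m^(1-r) ≤ (q'/q)^(1-r)
    have h1 : (mm δ n K k : ℝ)^(1-r) ≤ ((qq n K (k+1) : ℝ)/(qq n K k : ℝ))^(1-r) :=
      Real.rpow_le_rpow hm0 hm_le (by linarith)
    -- (q'/q)^(1-r) * q'^r = q' / q^(1-r)
    have h2 : ((qq n K (k+1) : ℝ)/(qq n K k : ℝ))^(1-r) * (qq n K (k+1) : ℝ)^r
        = (qq n K (k+1) : ℝ) / (qq n K k : ℝ)^(1-r) := by
      rw [Real.div_rpow (le_of_lt hqk1) (le_of_lt hqk)]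
      rw [div_mul_eq_mul_div, ← Real.rpow_add hqk1]
      norm_num
    -- 1/q^(1-r) ≤ c^(k+1)
    have h3 : (qq n K k : ℝ)^(1-r) ≠ 0 := ne_of_gt (Real.rpow_pos_of_pos hqk _)
    have h4'' : 1/(qq n K k : ℝ)^(1-r) ≤ c^(k+1) := by
      have hcpk : (0:ℝ) < c^(k+1) := by positivity
      rw [one_div_pow] at hbigk
      rw [div_le_iff₀ (Real.rpow_pos_of_pos hqk _)]
      have hmul := mul_le_mul_of_nonneg_left hbigk (le_of_lt hcpk)
      rw [mul_one_div_cancel (ne_of_gt hcpk)] at hmul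
      linarith
    -- M' ≥ c^(k+1) q'/q0
    have h5 : c^(k+1) * ((qq n K (k+1) : ℝ) / (qq n K 0 : ℝ)) ≤ (MM δ n K (k+1) : ℝ) :=
      MM_ge_c hδ hpos h4 (K := K) (k+1)
    -- conclude
    have hLHS : 2 * (mm δ n K k : ℝ)^(1-r) * (qq n K (k+1) : ℝ)^r
        ≤ 2 * (qq n K (k+1) : ℝ) * c^(k+1) := by
      have hq'r : (0:ℝ) < (qq n K (k+1) : ℝ)^r := Real.rpow_pos_of_pos hqk1 _
      calc 2 * (mm δ n K k : ℝ)^(1-r) * (qq n K (k+1) : ℝ)^r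
          ≤ 2 * ((qq n K (k+1) : ℝ)/(qq n K k : ℝ))^(1-r) * (qq n K (k+1) : ℝ)^r := by
            nlinarith [h1, hq'r]
        _ = 2 * ((qq n K (k+1) : ℝ) / (qq n K k : ℝ)^(1-r)) := by
            rw [mul_assoc, h2]
        _ = 2 * (qq n K (k+1) : ℝ) * (1/(qq n K k : ℝ)^(1-r)) := by ring
        _ ≤ 2 * (qq n K (k+1) : ℝ) * c^(k+1) := by nlinarith [h4'', hqk1]
    have hRHS : 2 * (qq n K (k+1) : ℝ) * c^(k+1) ≤ A * ((2*δ)^r * (MM δ n K (k+1) : ℝ)) := by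
      have h2δr : (0:ℝ) < (2*δ)^r := Real.rpow_pos_of_pos h2δ r
      have : A * ((2*δ)^r * (MM δ n K (k+1) : ℝ))
          = 2 * (qq n K 0 : ℝ) * (MM δ n K (k+1) : ℝ) := by
        rw [hA]; field_simp
      rw [this]
      have := mul_le_mul_of_nonneg_left h5 (by positivity : (0:ℝ) ≤ 2 * (qq n K 0 : ℝ))
      calc 2 * (qq n K (k+1) : ℝ) * c^(k+1)
          = 2 * (qq n K 0 : ℝ) * (c^(k+1) * ((qq n K (k+1) : ℝ) / (qq n K 0 : ℝ))) := by
            field_simp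
        _ ≤ 2 * (qq n K 0 : ℝ) * (MM δ n K (k+1) : ℝ) := this
    rw [hF, div_le_iff₀ (hden k)]
    calc 2 * (mm δ n K k : ℝ)^(1-r) * (qq n K (k+1) : ℝ)^r
        ≤ 2 * (qq n K (k+1) : ℝ) * c^(k+1) := hLHS
      _ ≤ A * ((2*δ)^r * (MM δ n K (k+1) : ℝ)) := hRHS
  set C : ℝ := max (max A 1) (((Finset.range (N+1)).image F).max' (by
    apply Finset.image_nonempty.mpr
    exact Finset.nonempty_range_iff.mpr (Nat.succ_ne_zero N))) with hC
  refine ⟨C, le_trans (le_max_right A 1) (le_max_left _ _), ?_⟩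
  intro k
  have hFk : F k ≤ C := by
    rcases le_or_gt k N with h | h
    · have hmem : F k ∈ (Finset.range (N+1)).image F :=
        Finset.mem_image_of_mem F (Finset.mem_range.mpr (Nat.lt_succ_of_le h))
      exact le_trans (Finset.le_max' _ _ hmem) (le_max_right _ _)
    · exact le_trans (hAk k (le_of_lt h)) (le_trans (le_max_left A 1) (le_max_left _ _))

  rw [hF] at hFk
  rw [div_le_iff₀ (hden k)] at hFk
  calc 2 * (mm δ n K k : ℝ)^(1-r) * (qq n K (k+1) : ℝ)^r
      ≤ C * ((2*δ)^r * (MM δ n K (k+1) : ℝ)) := hFk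

include hδ0 hδ hpos h4 in
theorem holder_core {r C : ℝ} (hr0 : 0 < r) (hr1 : r < 1) (hC1 : 1 ≤ C)
    (hC : ∀ k, 2 * (mm δ n K k : ℝ)^(1-r) * (qq n K (k+1) : ℝ)^r
      ≤ C * ((2*δ)^r * (MM δ n K (k+1) : ℝ)))
    (d e : ℕ → ℕ) (hd : d ∈ Dset δ n K) (he : e ∈ Dset δ n K) (k : ℕ)
    (hagree : ∀ j < k, d j = e j) (hlt : d k < e k) :
    |GG δ n K d - GG δ n K e| ≤ C * |Phi δ n K d - Phi δ n K e| ^ r := by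
  have hqk1 := hq hpos (K := K) (k+1)
  have hM1 := MM_one_le hδ hpos h4 (K := K) (k+1)
  have hMpos : (0:ℝ) < (MM δ n K (k+1) : ℝ) := by linarith
  set u : ℝ := (e k : ℝ) - (d k : ℝ) with hu
  have hu1 : (1:ℝ) ≤ u := by
    have : (d k : ℝ) + 1 ≤ (e k : ℝ) := by exact_mod_cast hlt
    rw [hu]; linarith
  have hupos : (0:ℝ) < u := by linarith
  have hG := GG_diff hδ hpos h4 d e hd he k hagree hlt
  have hP := Phi_sep hδ0 hδ hpos h4 d e hd he k hagree hlt
  have habs : 2*δ*u/(qq n K (k+1) : ℝ) ≤ |Phi δ n K d - Phi δ n K e| := by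
    rw [abs_sub_comm]
    exact le_trans hP (le_abs_self _)
  have hum : u ≤ (mm δ n K k : ℝ) := by
    have h1 : (e k : ℝ) ≤ (mm δ n K k : ℝ) := by
      have := he k
      exact_mod_cast le_of_lt this
    have h2 : (0:ℝ) ≤ (d k : ℝ) := Nat.cast_nonneg _
    rw [hu]; linarith
  have h2δ : (0:ℝ) < 2*δ := by linarith
  have hq'r : (0:ℝ) < (qq n K (k+1) : ℝ)^r := Real.rpow_pos_of_pos hqk1 _
  have h2δr : (0:ℝ) < (2*δ)^r := Real.rpow_pos_of_pos h2δ _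
  have hur : (0:ℝ) < u^r := Real.rpow_pos_of_pos hupos _
  -- key : 2u/M' ≤ C * (2δ u / q')^r
  have hsplit : (2*δ*u/(qq n K (k+1) : ℝ))^r = (2*δ)^r * u^r / (qq n K (k+1) : ℝ)^r := by
    rw [Real.div_rpow (by positivity) (le_of_lt hqk1), Real.mul_rpow (by linarith) (le_of_lt hupos)]
  have huu : u^(1-r) * u^r = u := by
    rw [← Real.rpow_add hupos]
    norm_num
  have hmono : u^(1-r) ≤ (mm δ n K k : ℝ)^(1-r) :=
    Real.rpow_le_rpow (le_of_lt hupos) hum (by linarith)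
  have hmain : 2*u/(MM δ n K (k+1) : ℝ) ≤ C * ((2*δ)^r * u^r / (qq n K (k+1) : ℝ)^r) := by
    have hre : C * ((2*δ)^r * u^r / (qq n K (k+1) : ℝ)^r)
        = (C * ((2*δ)^r * u^r)) / (qq n K (k+1) : ℝ)^r := by ring
    rw [hre, div_le_div_iff₀ hMpos hq'r]
    have hCk := hC k
    have step1 : 2 * u * (qq n K (k+1) : ℝ)^r
        ≤ 2 * (mm δ n K k : ℝ)^(1-r) * u^r * (qq n K (k+1) : ℝ)^r := by
      have key : (0:ℝ) ≤ ((mm δ n K k : ℝ)^(1-r) - u^(1-r)) * (u^r * (qq n K (k+1) : ℝ)^r) :=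
        mul_nonneg (by linarith [hmono]) (by positivity)
      calc 2 * u * (qq n K (k+1) : ℝ)^r
          = 2 * (u^(1-r) * u^r) * (qq n K (k+1) : ℝ)^r := by rw [huu]
        _ ≤ 2 * (mm δ n K k : ℝ)^(1-r) * u^r * (qq n K (k+1) : ℝ)^r := by nlinarith [key]
    have step2 : 2 * (mm δ n K k : ℝ)^(1-r) * u^r * (qq n K (k+1) : ℝ)^r
        ≤ C * ((2*δ)^r * (MM δ n K (k+1) : ℝ)) * u^r := by
      nlinarith [hCk, hur]
    calc 2 * u * (qq n K (k+1) : ℝ)^r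
        ≤ C * ((2*δ)^r * (MM δ n K (k+1) : ℝ)) * u^r := le_trans step1 step2
      _ = C * ((2*δ)^r * u^r) * (MM δ n K (k+1) : ℝ) := by ring
  have hrp : (2*δ*u/(qq n K (k+1) : ℝ))^r ≤ |Phi δ n K d - Phi δ n K e|^r :=
    Real.rpow_le_rpow (by positivity) habs (le_of_lt hr0)
  calc |GG δ n K d - GG δ n K e| ≤ 2*u/(MM δ n K (k+1) : ℝ) := hG
    _ ≤ C * ((2*δ)^r * u^r / (qq n K (k+1) : ℝ)^r) := hmain
    _ = C * (2*δ*u/(qq n K (k+1) : ℝ))^r := by rw [hsplit]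
    _ ≤ C * |Phi δ n K d - Phi δ n K e|^r := by
        have := mul_le_mul_of_nonneg_left hrp (by linarith : (0:ℝ) ≤ C)
        linarith

include hδ0 hδ hpos h4 in
theorem holder_full {r C : ℝ} (hr0 : 0 < r) (hr1 : r < 1) (hC1 : 1 ≤ C)
    (hC : ∀ k, 2 * (mm δ n K k : ℝ)^(1-r) * (qq n K (k+1) : ℝ)^r
      ≤ C * ((2*δ)^r * (MM δ n K (k+1) : ℝ)))
    (d e : ℕ → ℕ) (hd : d ∈ Dset δ n K) (he : e ∈ Dset δ n K) :
    |GG δ n K d - GG δ n K e| ≤ C * |Phi δ n K d - Phi δ n K e| ^ r := by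
  rcases eq_or_ne d e with rfl | hne
  · simp
    positivity
  · have hex : ∃ k, d k ≠ e k := by
      by_contra hc
      push_neg at hc
      exact hne (funext hc)
    set k := Nat.find hex with hk
    have hspec : d k ≠ e k := Nat.find_spec hex
    have hagree : ∀ j < k, d j = e j := fun j hj => not_not.mp (Nat.find_min hex hj)
    rcases lt_or_gt_of_ne hspec with h | h
    · exact holder_core hδ0 hδ hpos h4 hr0 hr1 hC1 hC d e hd he k hagree h
    · have hagree' : ∀ j < k, e j = d j := fun j hj => (hagree j hj).symm
      have := holder_core hδ0 hδ hpos h4 hr0 hr1 hC1 hC e d he hd k hagree' h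
      rw [abs_sub_comm (GG δ n K e), abs_sub_comm (Phi δ n K e)] at this
      exact this

include hδ0 hδ hpos in
theorem hbig_of_grow {r : ℝ} (hr0 : 0 < r) (hr1 : r < 1)
    (hgrow : Tendsto (fun k : ℕ => (n k : ℝ) ^ ((k : ℝ)⁻¹)) atTop atTop) :
    ∀ᶠ k in atTop, (1/((1-2*δ)/4))^(k+1) ≤ (qq n K k : ℝ)^(1-r) := by
  have hε : (0:ℝ) < 1 - 2*δ := by linarith
  set c : ℝ := (1-2*δ)/4 with hc
  have hcpos : (0:ℝ) < c := by positivity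
  have hclt : c < 1 := by rw [hc]; linarith
  have hinv1 : (1:ℝ) ≤ 1/c := by
    rw [le_div_iff₀ hcpos]; linarith
  set T : ℝ := max 2 ((1/c)^((2:ℝ)/(1-r))) with hT
  have hT2 : (2:ℝ) ≤ T := le_max_left _ _
  have hT0 : (0:ℝ) ≤ T := by linarith
  obtain ⟨N, hN⟩ := eventually_atTop.mp (hgrow.eventually_ge_atTop T)
  filter_upwards [eventually_ge_atTop (max N 1)] with k hk
  have hkN : N ≤ k := le_trans (le_max_left _ _) hk
  have hk1 : 1 ≤ k := le_trans (le_max_right _ _) hk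
  set j : ℕ := K + k with hj
  have hjN : N ≤ j := le_trans hkN (Nat.le_add_left k K)
  have h1 : T ≤ (n j : ℝ) ^ ((j : ℝ)⁻¹) := hN j hjN
  have hj1 : 1 ≤ j := le_trans hk1 (Nat.le_add_left k K)
  have hjne : ((j:ℕ):ℝ) ≠ 0 := by
    have : 0 < j := hj1
    positivity
  have hnn : (0:ℝ) ≤ (n j : ℝ) := Nat.cast_nonneg _
  have h2 : ((n j : ℝ) ^ ((j : ℝ)⁻¹))^(j:ℕ) = (n j : ℝ) := by
    rw [← Real.rpow_natCast ((n j : ℝ) ^ ((j : ℝ)⁻¹)) j, ← Real.rpow_mul hnn,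
      inv_mul_cancel₀ hjne, Real.rpow_one]
  have hTj : T^(j:ℕ) ≤ (n j : ℝ) := by
    calc T^(j:ℕ) ≤ ((n j : ℝ) ^ ((j : ℝ)⁻¹))^(j:ℕ) := pow_le_pow_left₀ hT0 h1 j
      _ = (n j : ℝ) := h2
  have hTk : T^(k:ℕ) ≤ (qq n K k : ℝ) := by
    calc T^(k:ℕ) ≤ T^(j:ℕ) := pow_le_pow_right₀ (by linarith) (Nat.le_add_left k K)
      _ ≤ (n j : ℝ) := hTj
      _ = (qq n K k : ℝ) := rfl
  have hq0 : (0:ℝ) ≤ (qq n K k : ℝ) := Nat.cast_nonneg _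
  have hfinal : (T^(k:ℕ))^(1-r) ≤ (qq n K k : ℝ)^(1-r) :=
    Real.rpow_le_rpow (by positivity) hTk (by linarith)
  -- now (1/c)^(k+1) ≤ (T^k)^(1-r)
  have hTnat : (T^(k:ℕ) : ℝ) = T ^ ((k:ℕ):ℝ) := (Real.rpow_natCast T k).symm
  have hstep : ((1:ℝ)/c)^((2:ℝ)*k) ≤ (T^(k:ℕ))^(1-r) := by
    rw [hTnat, ← Real.rpow_mul hT0]
    have hbase : (1/c)^((2:ℝ)/(1-r)) ≤ T := le_max_right _ _
    have hexp0 : (0:ℝ) ≤ (k:ℝ)*(1-r) := by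
      have : (0:ℝ) ≤ (k:ℝ) := Nat.cast_nonneg _
      nlinarith
    have h3 : ((1/c)^((2:ℝ)/(1-r)))^((k:ℝ)*(1-r)) ≤ T^((k:ℝ)*(1-r)) :=
      Real.rpow_le_rpow (by positivity) hbase hexp0
    have h4' : ((1/c)^((2:ℝ)/(1-r)))^((k:ℝ)*(1-r)) = (1/c)^((2:ℝ)*k) := by
      rw [← Real.rpow_mul (by positivity : (0:ℝ) ≤ 1/c)]
      congr 1
      have h1r : (1:ℝ) - r ≠ 0 := by linarith
      field_simp
    rw [← h4']
    exact h3
  have hmono : ((1:ℝ)/c)^((k:ℝ)+1) ≤ ((1:ℝ)/c)^((2:ℝ)*k) := by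
    apply Real.rpow_le_rpow_of_exponent_le hinv1
    have : (1:ℝ) ≤ (k:ℝ) := by exact_mod_cast hk1
    linarith
  have hcast : ((1:ℝ)/c)^(k+1) = ((1:ℝ)/c)^(((k:ℝ))+1) := by
    rw [← Real.rpow_natCast (1/c) (k+1)]
    push_cast
    ring_nf
  calc ((1:ℝ)/c)^(k+1) = ((1:ℝ)/c)^(((k:ℝ))+1) := hcast
    _ ≤ ((1:ℝ)/c)^((2:ℝ)*k) := hmono
    _ ≤ (T^(k:ℕ))^(1-r) := hstep
    _ ≤ (qq n K k : ℝ)^(1-r) := hfinal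

end Lem2

theorem stmt5 (δ : ℝ) (hδ0 : 0 < δ) (hδ : δ < 1 / 2)
    (n : ℕ → ℕ) (hmono : StrictMono n) (hpos : ∀ k, 0 < n k)
    (hratio : ∀ᶠ k in atTop, (4 : ℝ) / (1 - 2 * δ) ≤ (n (k + 1) : ℝ) / n k)
    (hgrow : Tendsto (fun k : ℕ => (n k : ℝ) ^ ((k : ℝ)⁻¹)) atTop atTop) :
    dimH {x ∈ Set.Icc (0 : ℝ) 1 | ∀ᶠ k in atTop, δ < nint (n k * x)} = 1 := by
  have hε : (0:ℝ) < 1 - 2*δ := by linarith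
  set S := {x ∈ Set.Icc (0 : ℝ) 1 | ∀ᶠ k in atTop, δ < nint (n k * x)} with hS
  obtain ⟨K, hK⟩ := eventually_atTop.mp hratio
  have h4 : ∀ k, 4 * (qq n K k : ℝ) ≤ (1 - 2*δ) * (qq n K (k+1) : ℝ) := by
    intro k
    have hq1 : (0:ℝ) < (n (K+k) : ℝ) := by exact_mod_cast hpos (K+k)
    have h0 := hK (K+k) (Nat.le_add_right K k)
    rw [div_le_div_iff₀ hε hq1] at h0
    show 4 * (n (K+k) : ℝ) ≤ (1 - 2*δ) * (n (K+k+1) : ℝ)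
    linarith
  have hsub : Phi δ n K '' Dset δ n K ⊆ S := by
    rintro x ⟨d, hd, rfl⟩
    refine ⟨Phi_mem_Icc hδ0 hδ hpos h4 d hd, ?_⟩
    rw [eventually_atTop]
    refine ⟨K, fun k hk => ?_⟩
    have hkk : K + (k - K) = k := Nat.add_sub_cancel' hk
    have hni := Phi_nint hδ0 hδ hpos h4 d hd (k - K)
    rwa [show (qq n K (k-K) : ℝ) = (n k : ℝ) by rw [qq, hkk]] at hni
  apply le_antisymm
  · calc dimH S ≤ dimH (Set.univ : Set ℝ) := dimH_mono (Set.subset_univ S)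
      _ = 1 := Real.dimH_univ
  · apply ENNReal.le_of_forall_nnreal_lt
    intro r hr
    rcases eq_or_ne r 0 with rfl | hrne
    · simp
    have hr1 : (r:ℝ) < 1 := by exact_mod_cast hr
    have hrpos' : 0 < r := pos_iff_ne_zero.mpr hrne
    have hr0 : (0:ℝ) < (r:ℝ) := by exact_mod_cast hrpos'
    have hbig := hbig_of_grow hδ0 hδ hpos (K := K) hr0 hr1 hgrow
    obtain ⟨C, hC1, hC⟩ := Cbound hδ0 hδ hpos h4 hr0 hr1 hbig
    set D := Dset δ n K with hD
    set f : ℝ → ℝ := fun x => GG δ n K (Function.invFunOn (Phi δ n K) D x) with hf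
    set C' : ℝ≥0 := Real.toNNReal C with hC'
    have hCoeC : ((C' : ℝ≥0) : ℝ≥0∞) = ENNReal.ofReal C := rfl
    have hHolder : HolderOnWith C' r f (Phi δ n K '' D) := by
      intro x hx y hy
      have hex : ∃ a ∈ D, Phi δ n K a = x := by
        obtain ⟨d, hd, hdx⟩ := hx
        exact ⟨d, hd, hdx⟩
      have hey : ∃ a ∈ D, Phi δ n K a = y := by
        obtain ⟨e, he, hey⟩ := hy
        exact ⟨e, he, hey⟩
      have hdx1 : Function.invFunOn (Phi δ n K) D x ∈ D := Function.invFunOn_mem hex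
      have hdx2 : Phi δ n K (Function.invFunOn (Phi δ n K) D x) = x := Function.invFunOn_eq hex
      have hdy1 : Function.invFunOn (Phi δ n K) D y ∈ D := Function.invFunOn_mem hey
      have hdy2 : Phi δ n K (Function.invFunOn (Phi δ n K) D y) = y := Function.invFunOn_eq hey
      have hcore := holder_full hδ0 hδ hpos h4 hr0 hr1 hC1 hC
        (Function.invFunOn (Phi δ n K) D x) (Function.invFunOn (Phi δ n K) D y) hdx1 hdy1
      rw [hdx2, hdy2] at hcore
      have hfx : f x = GG δ n K (Function.invFunOn (Phi δ n K) D x) := rfl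
      have hfy : f y = GG δ n K (Function.invFunOn (Phi δ n K) D y) := rfl
      rw [edist_dist, edist_dist, Real.dist_eq, Real.dist_eq, hfx, hfy]
      calc ENNReal.ofReal |GG δ n K (Function.invFunOn (Phi δ n K) D x)
            - GG δ n K (Function.invFunOn (Phi δ n K) D y)|
          ≤ ENNReal.ofReal (C * |x - y|^(r:ℝ)) := ENNReal.ofReal_le_ofReal hcore
        _ = ENNReal.ofReal C * ENNReal.ofReal (|x - y|^(r:ℝ)) :=
            ENNReal.ofReal_mul (by linarith)
        _ = ENNReal.ofReal C * ENNReal.ofReal |x - y| ^ (r:ℝ) := by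
            rw [ENNReal.ofReal_rpow_of_nonneg (abs_nonneg _) (le_of_lt hr0)]
        _ = (C' : ℝ≥0∞) * ENNReal.ofReal |x - y| ^ (r:ℝ) := by rw [hCoeC]
    have himg : Set.Ico (0:ℝ) 1 ⊆ f '' (Phi δ n K '' D) := by
      intro y hy
      have hdmem : dig δ n K y ∈ D := dig_mem hδ hpos h4 hy
      refine ⟨Phi δ n K (dig δ n K y), Set.mem_image_of_mem _ hdmem, ?_⟩
      have hex : ∃ a ∈ D, Phi δ n K a = Phi δ n K (dig δ n K y) := ⟨dig δ n K y, hdmem, rfl⟩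
      have h1 : Function.invFunOn (Phi δ n K) D (Phi δ n K (dig δ n K y)) ∈ D :=
        Function.invFunOn_mem hex
      have h2 : Phi δ n K (Function.invFunOn (Phi δ n K) D (Phi δ n K (dig δ n K y)))
          = Phi δ n K (dig δ n K y) := Function.invFunOn_eq hex
      have h3 : Function.invFunOn (Phi δ n K) D (Phi δ n K (dig δ n K y)) = dig δ n K y :=
        Phi_injOn hδ0 hδ hpos h4 h1 hdmem h2
      show GG δ n K (Function.invFunOn (Phi δ n K) D (Phi δ n K (dig δ n K y))) = y
      rw [h3]
      exact GG_dig hδ hpos h4 hy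
    have hd1 : dimH (Set.Ico (0:ℝ) 1) = 1 := by
      rw [Real.dimH_of_nonempty_interior]
      · simp
      · rw [interior_Ico]
        exact ⟨1/2, by norm_num⟩
    have h3 := hHolder.dimH_image_le hrpos'
    have hchain : (1:ℝ≥0∞) ≤ dimH (Phi δ n K '' D) / r := by
      calc (1:ℝ≥0∞) = dimH (Set.Ico (0:ℝ) 1) := hd1.symm
        _ ≤ dimH (f '' (Phi δ n K '' D)) := dimH_mono himg
        _ ≤ dimH (Phi δ n K '' D) / r := h3
    have hr' : (r:ℝ≥0∞) ≤ dimH (Phi δ n K '' D) := by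
      rw [ENNReal.le_div_iff_mul_le (Or.inl (by exact_mod_cast hrne))
        (Or.inl ENNReal.coe_ne_top)] at hchain
      simpa using hchain
    exact le_trans hr' (dimH_mono hsub)
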